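/- Let a ∈ ℚ₂. Then a belongs to ℤ₂ (i.e. the 2-adic valuation of a is ≥ 0) if and only if 1 + 2·a³ is a cube in ℚ₂. -/

import Mathlib

open Polynomial

lemma norm_three_padicInt : ‖(3 : ℤ_[2])‖ = 1 := by
  have h : (3 : ℤ_[2]) = 1 + 2 := by norm_num
  have h2 : ‖(2 : ℤ_[2])‖ = 2⁻¹ := by
    have := PadicInt.norm_p (p := 2)
    simpa using this
  rw [h, PadicInt.norm_add_eq_max_of_ne] <;> rw [norm_one, h2] <;> norm_num

lemma forward_dir (a : ℚ_[2]) (ha : ‖a‖ ≤ 1) :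
    ∃ z : ℚ_[2], z ^ 3 = 1 + 2 * a ^ 3 := by
  set b : ℤ_[2] := ⟨a, ha⟩ with hbdef
  set F : Polynomial ℤ_[2] := X ^ 3 - C (1 + 2 * b ^ 3) with hF
  have heval : F.eval 1 = -(2 * b ^ 3) := by simp [hF]
  have hderiv1 : F.derivative.eval 1 = 3 := by
    have hd : F.derivative = C 3 * X ^ 2 := by
      rw [hF]
      simp [Polynomial.derivative_pow]
    rw [hd]; simp
  have hnorm : ‖F.eval 1‖ < ‖F.derivative.eval 1‖ ^ 2 := by
    rw [heval, hderiv1, norm_three_padicInt]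
    have h2 : ‖(2 : ℤ_[2])‖ = 2⁻¹ := by
      have := PadicInt.norm_p (p := 2)
      simpa using this
    have hb : ‖b ^ 3‖ ≤ 1 := by
      calc ‖b ^ 3‖ = ‖b‖ ^ 3 := norm_pow b 3
        _ ≤ 1 := pow_le_one₀ (norm_nonneg b) b.norm_le_one
    calc ‖-(2 * b ^ 3)‖ = ‖(2:ℤ_[2])‖ * ‖b ^ 3‖ := by rw [norm_neg, norm_mul]
      _ ≤ 2⁻¹ * 1 := by rw [h2]; exact mul_le_mul_of_nonneg_left hb (by norm_num)
      _ < 1 ^ 2 := by norm_num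
  obtain ⟨z, hz, -⟩ := hensels_lemma hnorm
  have hz' : z ^ 3 = 1 + 2 * b ^ 3 := by
    have : z ^ 3 - (1 + 2 * b ^ 3) = 0 := by simpa [hF] using hz
    exact sub_eq_zero.mp this
  refine ⟨(z : ℚ_[2]), ?_⟩
  have := congrArg (fun x : ℤ_[2] => (x : ℚ_[2])) hz'
  push_cast at this
  have h2c : ((2:ℤ_[2]) : ℚ_[2]) = 2 := by simpa using PadicInt.coe_natCast (p := 2) 2
  simpa [hbdef, h2c] using this

lemma backward_dir (a : ℚ_[2]) (z : ℚ_[2]) (hz : z ^ 3 = 1 + 2 * a ^ 3) :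
    ‖a‖ ≤ 1 := by
  by_contra h
  have ha0 : a ≠ 0 := by rintro rfl; simp at h
  rw [Padic.norm_le_one_iff_val_nonneg, not_le] at h
  -- valuation of a is negative
  have hva : a.valuation < 0 := h
  have hv2 : (2 : ℚ_[2]).valuation = 1 := by
    have := Padic.valuation_p (p := 2)
    simpa using this
  have hva3 : (a ^ 3).valuation = 3 * a.valuation := by
    have h1 : a ^ 3 = a * (a * a) := by ring
    rw [h1, Padic.valuation_mul ha0 (mul_ne_zero ha0 ha0),
      Padic.valuation_mul ha0 ha0]
    ring
  have h2a3 : (2 * a ^ 3).valuation = 1 + 3 * a.valuation := by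
    rw [Padic.valuation_mul (by norm_num : (2:ℚ_[2]) ≠ 0) (pow_ne_zero 3 ha0),
      hv2, hva3]
  -- norm of 2*a^3 is 2^(-(1+3v)) ≥ 4 > 1
  have hne2a3 : (2 * a ^ 3) ≠ 0 := mul_ne_zero (by norm_num) (pow_ne_zero 3 ha0)
  have hnorm2a3 : ‖2 * a ^ 3‖ = (2:ℝ) ^ (-(1 + 3 * a.valuation)) := by
    rw [Padic.norm_eq_zpow_neg_valuation hne2a3, h2a3]; norm_num
  have hgt : (1:ℝ) < ‖2 * a ^ 3‖ := by
    rw [hnorm2a3]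
    have : (0:ℤ) < -(1 + 3 * a.valuation) := by omega
    calc (1:ℝ) = (2:ℝ) ^ (0:ℤ) := by norm_num
      _ < (2:ℝ) ^ (-(1 + 3 * a.valuation)) := by
        apply zpow_lt_zpow_right₀ (by norm_num) this
  have hmax : ‖(1:ℚ_[2]) + 2 * a ^ 3‖ = ‖2 * a ^ 3‖ := by
    rw [Padic.add_eq_max_of_ne (by rw [norm_one]; exact ne_of_lt hgt)]
    rw [norm_one]
    exact max_eq_right (le_of_lt hgt)
  have hz0 : z ≠ 0 := by
    rintro rfl
    rw [zero_pow (by norm_num)] at hz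
    have : ‖(0:ℚ_[2])‖ = ‖(1:ℚ_[2]) + 2 * a ^ 3‖ := by rw [hz]
    rw [norm_zero, hmax] at this
    linarith
  have hvz3 : (z ^ 3).valuation = 3 * z.valuation := by
    have h1 : z ^ 3 = z * (z * z) := by ring
    rw [h1, Padic.valuation_mul hz0 (mul_ne_zero hz0 hz0),
      Padic.valuation_mul hz0 hz0]
    ring
  have hz3ne : z ^ 3 ≠ 0 := pow_ne_zero 3 hz0
  have hkey : ‖z ^ 3‖ = ‖2 * a ^ 3‖ := by rw [hz, hmax]
  rw [Padic.norm_eq_zpow_neg_valuation hz3ne, hnorm2a3, hvz3] at hkey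
  have heq : -(3 * z.valuation) = -(1 + 3 * a.valuation) :=
    (zpow_right_inj₀ (by norm_num : (0:ℝ) < 2) (by norm_num)).mp hkey
  omega

/-- a ∈ ℚ₂ lies in ℤ₂ iff 1 + 2·a³ is a cube in ℚ₂. -/
theorem stmt_10 (a : ℚ_[2]) :
    ‖a‖ ≤ 1 ↔ ∃ z : ℚ_[2], z ^ 3 = 1 + 2 * a ^ 3 := by
  constructor
  · exact forward_dir a
  · rintro ⟨z, hz⟩
    exact backward_dir a z hz
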